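/- Let T be a triangulated category satisfying the octahedral axiom, P a connective class of objects closed under isomorphisms and finite direct sums containing 0, and I ⊆ P a subclass closed under isomorphisms and finite direct sums containing 0. Fix d ≥ 1 and set A^{(d+1)} := (P ∗ ΣP ∗ ⋯ ∗ Σ^{d+1}P) ∩ { X : Hom_T(X, Σ^m I') = 0 for all I' ∈ I, m ≥ 1 }. Then for X ∈ A^{(d+1)} the following are equivalent: (i) Hom_T(X, ΣY) = 0 for every Y ∈ A^{(d+1)}; (ii) there exist P' ∈ P and an object Z of T with P' ≅ X ⊕ Z, i.e. X is a direct summand of an object of P. -/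

import Mathlib

/-!
Statement 3: for `X ∈ A^{(d+1)} = (P ∗ ΣP ∗ ⋯ ∗ Σ^{d+1}P) ∩ ker Ext^{≥1}(-, I)`,
`X` is projective (i.e. `Hom(X, ΣY) = 0` for all `Y ∈ A^{(d+1)}`) if and only if `X`
is a direct summand of an object of `P`.
-/

open CategoryTheory Limits Pretriangulated
open scoped ZeroObject

universe v u

namespace AuslanderIyamaStmt3

variable {C : Type u} [Category.{v} C] [HasZeroObject C] [HasShift C ℤ] [Preadditive C]
  [∀ n : ℤ, (shiftFunctor C n).Additive] [Pretriangulated C] [HasBinaryBiproducts C]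

/-- `S₁ ∗ S₂`: objects `Y` fitting in a distinguished triangle `X ⟶ Y ⟶ Z ⟶ X⟦1⟧`
with `X ∈ S₁` and `Z ∈ S₂`. -/
def star (S₁ S₂ : Set C) : Set C :=
  {Y | ∃ (X Z : C) (f : X ⟶ Y) (g : Y ⟶ Z) (h : Z ⟶ X⟦(1 : ℤ)⟧),
    (Triangle.mk f g h ∈ distTriang C) ∧ X ∈ S₁ ∧ Z ∈ S₂}

/-- `Σⁿ S`, closed under isomorphism. -/
def shiftSet (n : ℤ) (S : Set C) : Set C :=
  {X | ∃ Y ∈ S, Nonempty (X ≅ Y⟦n⟧)}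

/-- `V n = P ∗ ΣP ∗ ⋯ ∗ Σⁿ P` (associated to the left; by the octahedral axiom `∗` is
associative so the grouping is irrelevant). -/
def V (P : Set C) : ℕ → Set C
  | 0 => P
  | n + 1 => star (V P n) (shiftSet ((n : ℤ) + 1) P)

/-- The kernel class `{X : Hom(X, Σ^m I') = 0 for all I' ∈ I, m ≥ 1}`. -/
def extKer (I : Set C) : Set C :=
  {X | ∀ I' ∈ I, ∀ m : ℤ, 1 ≤ m → ∀ f : X ⟶ I'⟦m⟧, f = 0}

/-! ### Auxiliary lemmas -/

lemma vanish_of_iso {A B B' : C} (e : B ≅ B') (hv : ∀ f : A ⟶ B', f = 0)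
    (f : A ⟶ B) : f = 0 := by
  have : f = (f ≫ e.hom) ≫ e.inv := by simp
  rw [this, hv (f ≫ e.hom), zero_comp]

lemma vanish_target_assoc {A B : C} (a b c : ℤ) (h : a + b = c)
    (hv : ∀ f : A ⟶ B⟦c⟧, f = 0) (f : A ⟶ B⟦a⟧⟦b⟧) : f = 0 := by
  have h0 : f ≫ ((shiftFunctorAdd' C a b c h).app B).inv = 0 := hv _
  have : f = (f ≫ ((shiftFunctorAdd' C a b c h).app B).inv) ≫
      ((shiftFunctorAdd' C a b c h).app B).hom := by simp
  rw [this, h0, zero_comp]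

lemma vanish_of_shift_src {A B : C} (m : ℤ)
    (hv : ∀ f : A ⟶ B⟦m + 1⟧, f = 0) (g : A⟦(-1 : ℤ)⟧ ⟶ B⟦m⟧) : g = 0 := by
  let e₁ : A ≅ A⟦(-1 : ℤ)⟧⟦(1 : ℤ)⟧ :=
    ((shiftFunctorZero C ℤ).app A).symm ≪≫ (shiftFunctorAdd' C (-1) 1 0 (by ring)).app A
  let e₂ : B⟦m⟧⟦(1 : ℤ)⟧ ≅ B⟦m + 1⟧ := ((shiftFunctorAdd' C m 1 (m + 1) rfl).app B).symm
  have h0 : e₁.hom ≫ (shiftFunctor C (1 : ℤ)).map g ≫ e₂.hom = 0 := hv _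
  have h1 : (shiftFunctor C (1 : ℤ)).map g =
      e₁.inv ≫ (e₁.hom ≫ (shiftFunctor C (1 : ℤ)).map g ≫ e₂.hom) ≫ e₂.inv := by simp
  have h2 : (shiftFunctor C (1 : ℤ)).map g = 0 := by
    rw [h1, h0, zero_comp, comp_zero]
  apply (shiftFunctor C (1 : ℤ)).map_injective
  rw [h2, Functor.map_zero]

/-- `star` is closed under isomorphism of the middle object. -/
lemma star_iso {S₁ S₂ : Set C} {Y Y' : C} (e : Y ≅ Y') (hY : Y ∈ star S₁ S₂) :
    Y' ∈ star S₁ S₂ := by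
  obtain ⟨A, Z, f, g, h, hT, hA, hZ⟩ := hY
  refine ⟨A, Z, f ≫ e.hom, e.inv ≫ g, h, ?_, hA, hZ⟩
  refine isomorphic_distinguished _ hT _ ?_
  refine Triangle.isoMk _ _ (Iso.refl _) e.symm (Iso.refl _) ?_ ?_ ?_
  · change (f ≫ e.hom) ≫ e.inv = 𝟙 A ≫ f; simp
  · change (e.inv ≫ g) ≫ 𝟙 Z = e.inv ≫ g; simp
  · change h ≫ (shiftFunctor C 1).map (𝟙 A) = 𝟙 Z ≫ h; simp

/-- Each `V P n` is closed under isomorphism. -/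
lemma V_iso (P : Set C) (hPiso : ∀ ⦃X Y : C⦄, (X ≅ Y) → X ∈ P → Y ∈ P) :
    ∀ (n : ℕ) {X Y : C}, (X ≅ Y) → X ∈ V P n → Y ∈ V P n := by
  intro n
  cases n with
  | zero => intro X Y e hX; exact hPiso e hX
  | succ n => intro X Y e hX; exact star_iso e hX

/-- `V P n ⊆ V P (n+1)`. -/
lemma V_mono (P : Set C) (hPzero : ∀ ⦃X : C⦄, IsZero X → X ∈ P) (n : ℕ) :
    V P n ⊆ V P (n + 1) := by
  intro W hW
  refine ⟨W, 0, 𝟙 W, 0, 0, contractible_distinguished W, hW, 0, hPzero (isZero_zero C), ?_⟩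
  exact ⟨(isZero_zero C).iso (Functor.map_isZero _ (isZero_zero C))⟩

/-- Objects of `P` have no positive exts to objects of `V P n`. -/
lemma vanish_V (P : Set C)
    (hPconn : ∀ ⦃X Y : C⦄, X ∈ P → Y ∈ P → ∀ n : ℤ, 1 ≤ n → ∀ f : X ⟶ Y⟦n⟧, f = 0) :
    ∀ (n : ℕ) {Y : C}, Y ∈ V P n → ∀ {Q : C}, Q ∈ P → ∀ (m : ℤ), 1 ≤ m →
      ∀ f : Q ⟶ Y⟦m⟧, f = 0 := by
  intro n
  induction n with
  | zero =>
    intro Y hY Q hQ m hm f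
    exact hPconn hQ hY m hm f
  | succ n ih =>
    rintro Y ⟨W, Z, u, v, w, hT, hW, Q', hQ', ⟨eZ⟩⟩ Q hQ m hm f
    have hT' : (Triangle.shiftFunctor C m).obj (Triangle.mk u v w) ∈ distTriang C :=
      Triangle.shift_distinguished _ hT m
    have hvZ : ∀ g : Q ⟶ (Z⟦m⟧), g = 0 := by
      intro g
      refine vanish_of_iso ((shiftFunctor C m).mapIso eZ) ?_ g
      refine vanish_target_assoc ((n : ℤ) + 1) m ((n : ℤ) + 1 + m) rfl ?_
      intro f'
      have hn : (0 : ℤ) ≤ (n : ℤ) := Int.ofNat_nonneg n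
      exact hPconn hQ hQ' ((n : ℤ) + 1 + m) (by omega) f'
    obtain ⟨g, hg⟩ := Triangle.coyoneda_exact₂ _ hT' f (hvZ _)
    have hg0 : g = 0 := ih hW hQ m hm g
    rw [hg, hg0, zero_comp]
    rfl

/-- Existence of a `P`-cover: every `X ∈ V P (n+1)` sits in a distinguished triangle
`Y ⟶ P₀ ⟶ X ⟶ Y⟦1⟧` with `P₀ ∈ P` and `Y ∈ V P n`. -/
lemma cover [IsTriangulated C] (P : Set C)
    (hPiso : ∀ ⦃X Y : C⦄, (X ≅ Y) → X ∈ P → Y ∈ P) :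
    ∀ (n : ℕ) {X : C}, X ∈ V P (n + 1) →
      ∃ (Y P₀ : C) (i : Y ⟶ P₀) (p : P₀ ⟶ X) (δ : X ⟶ Y⟦(1 : ℤ)⟧),
        (Triangle.mk i p δ ∈ distTriang C) ∧ P₀ ∈ P ∧ Y ∈ V P n := by
  intro n
  induction n with
  | zero =>
    rintro X ⟨W, Z, u, v, w, hT, hW, Q, hQ, ⟨eZ⟩⟩
    have hT' := inv_rot_of_distTriang _ hT
    refine ⟨Z⟦(-1 : ℤ)⟧, W, (Triangle.mk u v w).invRotate.mor₁,
      (Triangle.mk u v w).invRotate.mor₂, (Triangle.mk u v w).invRotate.mor₃, hT', hW, ?_⟩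
    -- `Z⟦-1⟧ ≅ Q`, so it lies in `P = V P 0`.
    have e : Z⟦(-1 : ℤ)⟧ ≅ Q :=
      (shiftFunctor C (-1 : ℤ)).mapIso eZ ≪≫
        ((shiftFunctorAdd' C ((0 : ℤ) + 1) (-1) 0 (by ring)).app Q).symm ≪≫
        (shiftFunctorZero C ℤ).app Q
    exact hPiso e.symm hQ
  | succ n ih =>
    rintro X ⟨W, Z, u, v, w, hT, hW, Q, hQ, ⟨eZ⟩⟩
    obtain ⟨Y₀, P₀, i₀, p₀, δ₀, hT₀, hP₀, hY₀⟩ := ih hW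
    -- rotate the cover triangle of `W`
    have hrot : Triangle.mk p₀ δ₀ (-i₀⟦(1 : ℤ)⟧') ∈ distTriang C :=
      rot_of_distTriang _ hT₀
    -- a cone on `p₀ ≫ u`
    obtain ⟨E, g, h', hTE⟩ := distinguished_cocone_triangle (p₀ ≫ u)
    have oct := Triangulated.someOctahedron rfl hrot hT hTE
    -- the cover triangle of `X` is the inverse rotation of the cone triangle
    have hcov := inv_rot_of_distTriang _ hTE
    refine ⟨E⟦(-1 : ℤ)⟧, P₀, (Triangle.mk (p₀ ≫ u) g h').invRotate.mor₁,
      (Triangle.mk (p₀ ≫ u) g h').invRotate.mor₂,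
      (Triangle.mk (p₀ ≫ u) g h').invRotate.mor₃, hcov, hP₀, ?_⟩
    -- show `E⟦-1⟧ ∈ V P (n+1)` using the octahedron triangle shifted by `-1`
    have hmem := oct.mem
    have hsh : (Triangle.shiftFunctor C (-1 : ℤ)).obj oct.triangle ∈ distTriang C :=
      Triangle.shift_distinguished _ hmem (-1)
    set T₃ := (Triangle.shiftFunctor C (-1 : ℤ)).obj oct.triangle with hT₃
    refine ⟨T₃.obj₁, T₃.obj₃, T₃.mor₁, T₃.mor₂, T₃.mor₃, hsh, ?_, ?_⟩
    · -- `T₃.obj₁ = Y₀⟦1⟧⟦-1⟧ ≅ Y₀ ∈ V P n`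
      have e : Y₀ ≅ Y₀⟦(1 : ℤ)⟧⟦(-1 : ℤ)⟧ :=
        ((shiftFunctorZero C ℤ).app Y₀).symm ≪≫
          (shiftFunctorAdd' C 1 (-1) 0 (by ring)).app Y₀
      exact V_iso P hPiso n e hY₀
    · -- `T₃.obj₃ = Z⟦-1⟧ ≅ Q⟦n+1⟧ ∈ shiftSet (n+1) P`
      refine ⟨Q, hQ, ⟨?_⟩⟩
      exact (shiftFunctor C (-1 : ℤ)).mapIso eZ ≪≫
        ((shiftFunctorAdd' C ((↑(n + 1) : ℤ) + 1) (-1) ((n : ℤ) + 1)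
          (by push_cast; ring)).app Q).symm
  
theorem statement3 [IsTriangulated C] (d : ℕ) (hd : 1 ≤ d) (P I : Set C) (hIP : I ⊆ P)
    (hPiso : ∀ ⦃X Y : C⦄, (X ≅ Y) → X ∈ P → Y ∈ P)
    (hPsum : ∀ ⦃X Y : C⦄, X ∈ P → Y ∈ P → (X ⊞ Y) ∈ P)
    (hPzero : ∀ ⦃X : C⦄, IsZero X → X ∈ P)
    (hPconn : ∀ ⦃X Y : C⦄, X ∈ P → Y ∈ P → ∀ n : ℤ, 1 ≤ n → ∀ f : X ⟶ Y⟦n⟧, f = 0)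
    (hIiso : ∀ ⦃X Y : C⦄, (X ≅ Y) → X ∈ I → Y ∈ I)
    (hIsum : ∀ ⦃X Y : C⦄, X ∈ I → Y ∈ I → (X ⊞ Y) ∈ I)
    (hIzero : ∀ ⦃X : C⦄, IsZero X → X ∈ I)
    {X : C} (hX : X ∈ V P (d + 1) ∩ extKer I) :
    (∀ Y ∈ V P (d + 1) ∩ extKer I, ∀ f : X ⟶ Y⟦(1 : ℤ)⟧, f = 0) ↔
      (∃ (P' Z : C), P' ∈ P ∧ Nonempty (P' ≅ X ⊞ Z)) := by
  constructor
  · -- (i) ⇒ (ii)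
    intro hproj
    obtain ⟨Y, P₀, i, p, δ, hTc, hP₀, hY⟩ := cover P hPiso d hX.1
    -- `Y ∈ extKer I`
    have hker : Y ∈ extKer I := by
      intro I' hI' m hm f
      have hT' := inv_rot_of_distTriang _ hTc
      have hf : (Triangle.mk i p δ).invRotate.mor₁ ≫ f = 0 := by
        apply vanish_of_shift_src m
        intro f'
        exact hX.2 I' hI' (m + 1) (by omega) f'
      obtain ⟨q, hq⟩ := Triangle.yoneda_exact₂ _ hT' f hf
      have hq0 : q = 0 := hPconn hP₀ (hIP hI') m hm q
      rw [hq, hq0, comp_zero]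
      rfl
    have hYA : Y ∈ V P (d + 1) ∩ extKer I := ⟨V_mono P hPzero d hY, hker⟩
    have hδ : δ = 0 := hproj Y hYA δ
    obtain ⟨e, -, -⟩ := exists_iso_binaryBiproduct_of_distTriang (Triangle.mk i p δ) hTc hδ
    exact ⟨P₀, Y, hP₀, ⟨e ≪≫ biprod.braiding Y X⟩⟩
  · -- (ii) ⇒ (i)
    rintro ⟨P', Z, hP', ⟨e⟩⟩ Y ⟨hYV, -⟩ f
    have h0 : e.hom ≫ biprod.fst ≫ f = 0 :=
      vanish_V P hPconn (d + 1) hYV hP' 1 le_rfl _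
    have : f = biprod.inl ≫ e.inv ≫ (e.hom ≫ biprod.fst ≫ f) := by simp
    rw [this, h0, comp_zero, comp_zero]

end AuslanderIyamaStmt3
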